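/- Let Σ ∈ ℝ^{n×n} be symmetric positive definite, Γ ∈ ℝ^{k×n}, and c > 0. For A ∈ ℝ^{p×n} with A ≠ 0 define MSE(A) = Tr(Γ Σ Γᵀ) − Tr( Γ Σ Aᵀ ( A Σ Aᵀ + c · m(A) · I_p )^{−1} A Σ Γᵀ ), where m(A) = max_{1 ≤ l ≤ p} (A Σ Aᵀ)_{l,l}. Then for every A ≠ 0 there exists a real orthogonal matrix U ∈ ℝ^{p×p} such that MSE(U A) = Tr(Γ Σ Γᵀ) − Tr( Γ Σ Aᵀ ( A Σ Aᵀ + (c/p) Tr(A Σ Aᵀ) I_p )^{−1} A Σ Γᵀ ), and MSE(A) ≥ MSE(U A). -/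

import Mathlib

open Matrix Finset

lemma exists_unit_vec_quad {p : ℕ} (hp2 : 2 ≤ p) (M : Matrix (Fin p) (Fin p) ℝ) :
    ∃ v : EuclideanSpace ℝ (Fin p), ‖v‖ = 1 ∧
      ∑ a, ∑ b, v a * M a b * v b = Matrix.trace M / p := by
  have hppos : 0 < p := by omega
  haveI : NeZero p := ⟨by omega⟩
  set t : ℝ := Matrix.trace M / p with ht
  have hpne : (p : ℝ) ≠ 0 := by positivity
  have hsum : ∑ i, M i i = p * t := by
    rw [ht]; field_simp [Matrix.trace]; rfl
  have hne : (Finset.univ : Finset (Fin p)).Nonempty := Finset.univ_nonempty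
  obtain ⟨i, -, hi⟩ : ∃ i ∈ Finset.univ, M i i ≤ t := by
    by_contra h
    push_neg at h
    have : ∑ _i : Fin p, t < ∑ i, M i i :=
      Finset.sum_lt_sum_of_nonempty hne fun i _ => h i (Finset.mem_univ i)
    simp [Finset.sum_const, hsum, mul_comm] at this
  obtain ⟨j, -, hj⟩ : ∃ j ∈ Finset.univ, t ≤ M j j := by
    by_contra h
    push_neg at h
    have : ∑ i, M i i < ∑ _i : Fin p, t :=
      Finset.sum_lt_sum_of_nonempty hne fun i _ => h i (Finset.mem_univ i)
    simp [Finset.sum_const, hsum, mul_comm] at this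
  set q : EuclideanSpace ℝ (Fin p) → ℝ := fun v => ∑ a, ∑ b, v a * M a b * v b with hq
  have hcont : Continuous q := by
    apply continuous_finset_sum
    intro a _
    apply continuous_finset_sum
    intro b _
    exact (((EuclideanSpace.proj a :
        EuclideanSpace ℝ (Fin p) →L[ℝ] ℝ).continuous.mul continuous_const).mul
        (EuclideanSpace.proj b : EuclideanSpace ℝ (Fin p) →L[ℝ] ℝ).continuous)
  have hqe : ∀ l : Fin p, q (EuclideanSpace.single l (1:ℝ)) = M l l := by
    intro l
    simp [hq, EuclideanSpace.single_apply]
  have hconn : IsPreconnected (Metric.sphere (0 : EuclideanSpace ℝ (Fin p)) 1) := by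
    refine (isConnected_sphere ?_ 0 zero_le_one).isPreconnected
    rw [← Module.finrank_eq_rank, finrank_euclideanSpace_fin]
    exact_mod_cast hp2.trans_lt' one_lt_two
  have hmem : ∀ l : Fin p, EuclideanSpace.single l (1:ℝ) ∈
      Metric.sphere (0 : EuclideanSpace ℝ (Fin p)) 1 := by
    intro l
    simp [EuclideanSpace.norm_single]
  have hsub := hconn.intermediate_value (hmem i) (hmem j) hcont.continuousOn
  have : t ∈ Set.Icc (q (EuclideanSpace.single i (1:ℝ))) (q (EuclideanSpace.single j (1:ℝ))) := by
    rw [hqe i, hqe j]; exact ⟨hi, hj⟩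
  obtain ⟨v, hv, hqv⟩ := hsub this
  exact ⟨v, by simpa using hv, hqv⟩

lemma exists_orth_first_row {p : ℕ} [NeZero p] (v : EuclideanSpace ℝ (Fin p))
    (hv : ‖v‖ = 1) :
    ∃ V : Matrix (Fin p) (Fin p) ℝ, Vᵀ * V = 1 ∧ ∀ j, V 0 j = v j := by
  have hcard : Module.finrank ℝ (EuclideanSpace ℝ (Fin p)) = Fintype.card (Fin p) := by
    simp [finrank_euclideanSpace_fin]
  have horth : Orthonormal ℝ (Set.restrict ({0} : Set (Fin p)) (fun _ => v)) := by
    constructor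
    · intro i; exact hv
    · intro i j hij
      exact absurd (Subtype.ext (by
        have hi := i.2; have hj := j.2
        simp only [Set.mem_singleton_iff] at hi hj
        rw [hi, hj])) hij
  obtain ⟨b, hb⟩ := horth.exists_orthonormalBasis_extension_of_card_eq hcard
  refine ⟨Matrix.of (fun i j => b i j), ?_, ?_⟩
  · rw [← mul_eq_one_comm]
    ext i i'
    have := (orthonormal_iff_ite.mp b.orthonormal) i i'
    rw [PiLp.inner_apply] at this
    simp only [RCLike.inner_apply, starRingEnd_apply, star_trivial] at this
    simpa [Matrix.mul_apply, Matrix.one_apply, mul_comm] using this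
  · intro j
    rw [Matrix.of_apply, hb 0 rfl]

lemma exists_first_diag {p : ℕ} [NeZero p] (M : Matrix (Fin p) (Fin p) ℝ) :
    ∃ V : Matrix (Fin p) (Fin p) ℝ, Vᵀ * V = 1 ∧
      (V * M * Vᵀ) 0 0 = Matrix.trace M / p := by
  rcases eq_or_lt_of_le (Nat.one_le_iff_ne_zero.mpr (NeZero.ne p)) with h1 | h2
  · -- p = 1
    refine ⟨1, by simp, ?_⟩
    have : ∀ a : Fin p, a = 0 := by
      intro a; rcases a with ⟨a, ha⟩; rcases (by omega : a = 0) with rfl; rfl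
    rw [Matrix.one_mul, Matrix.transpose_one, Matrix.mul_one]
    rw [Matrix.trace]
    rw [show (Finset.univ : Finset (Fin p)) = {0} from
      Finset.eq_singleton_iff_unique_mem.mpr ⟨Finset.mem_univ _, fun x _ => this x⟩]
    simp [← h1]
  · obtain ⟨v, hv, hqv⟩ := exists_unit_vec_quad h2 M
    obtain ⟨V, hVo, hVr⟩ := exists_orth_first_row v hv
    refine ⟨V, hVo, ?_⟩
    rw [← hqv]
    simp only [Matrix.mul_apply, Matrix.transpose_apply, hVr]
    rw [Finset.sum_comm]
    simp_rw [Finset.sum_mul]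

lemma exists_const_diag : ∀ (p : ℕ) (M : Matrix (Fin p) (Fin p) ℝ), Mᵀ = M →
    ∃ U : Matrix (Fin p) (Fin p) ℝ, Uᵀ * U = 1 ∧
      ∀ l, (U * M * Uᵀ) l l = Matrix.trace M / p := by
  intro p
  induction p with
  | zero => exact fun M _ => ⟨1, by simp, fun l => l.elim0⟩
  | succ m ih =>
    intro M hM
    haveI : NeZero (m + 1) := ⟨by omega⟩
    obtain ⟨V, hVo, hV00⟩ := exists_first_diag M
    set N := V * M * Vᵀ with hN
    have hVVt : V * Vᵀ = 1 := mul_eq_one_comm.mp hVo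
    have htrN : Matrix.trace N = Matrix.trace M := by
      rw [hN, Matrix.trace_mul_cycle, hVo, Matrix.one_mul]
    set M' : Matrix (Fin m) (Fin m) ℝ := Matrix.of (fun i j => N i.succ j.succ) with hM'
    have hM'symm : M'ᵀ = M' := by
      ext i j
      have : Nᵀ = N := by
        rw [hN, Matrix.transpose_mul, Matrix.transpose_mul, Matrix.transpose_transpose, hM,
          Matrix.mul_assoc]
      simp only [hM', Matrix.transpose_apply, Matrix.of_apply]
      exact congrFun (congrFun this i.succ) j.succ
    obtain ⟨W', hW'o, hW'diag⟩ := ih M' hM'symm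
    -- build block matrix W = diag(1, W')
    set W : Matrix (Fin (m+1)) (Fin (m+1)) ℝ :=
      Matrix.of (fun a b => Fin.cases (Fin.cases (1:ℝ) (fun _ => 0) b)
        (fun a' => Fin.cases (0:ℝ) (fun b' => W' a' b') b) a) with hW
    have hW00 : W 0 0 = 1 := rfl
    have hW0s : ∀ b' : Fin m, W 0 b'.succ = 0 := fun _ => rfl
    have hWs0 : ∀ a' : Fin m, W a'.succ 0 = 0 := fun _ => rfl
    have hWss : ∀ a' b' : Fin m, W a'.succ b'.succ = W' a' b' := fun _ _ => rfl
    have hWo : Wᵀ * W = 1 := by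
      ext a b
      rw [Matrix.mul_apply]
      induction a using Fin.cases with
      | zero =>
        induction b using Fin.cases with
        | zero => simp [Fin.sum_univ_succ, hW00, hWs0, Matrix.one_apply]
        | succ b' => simp [Fin.sum_univ_succ, hW00, hW0s, hWs0, Matrix.one_apply,
            (Fin.succ_ne_zero b').symm]
      | succ a' =>
        induction b using Fin.cases with
        | zero => simp [Fin.sum_univ_succ, hW00, hW0s, hWs0, Matrix.one_apply,
            Fin.succ_ne_zero a']
        | succ b' =>
          have := congrFun (congrFun hW'o a') b'
          rw [Matrix.mul_apply] at this
          simp only [Matrix.transpose_apply] at this ⊢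
          rw [Fin.sum_univ_succ]
          simp only [hW0s, hWss, zero_mul, zero_add]
          rw [this]
          simp [Matrix.one_apply, Fin.succ_inj]
      done
    refine ⟨W * V, ?_, ?_⟩
    · rw [Matrix.transpose_mul, Matrix.mul_assoc, ← Matrix.mul_assoc Wᵀ, hWo, Matrix.one_mul, hVo]
    · have hconj : (W * V) * M * (W * V)ᵀ = W * N * Wᵀ := by
        rw [Matrix.transpose_mul, hN]
        noncomm_ring
      rw [hconj]
      intro l
      induction l using Fin.cases with
      | zero =>
        rw [← hV00]
        simp [Matrix.mul_apply, Fin.sum_univ_succ, hW00, hW0s]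
      | succ l' =>
        have hm : 0 < m := l'.pos
        have hml : (W * N * Wᵀ) l'.succ l'.succ = (W' * M' * W'ᵀ) l' l' := by
          simp only [Matrix.mul_apply, Matrix.transpose_apply]
          rw [Fin.sum_univ_succ]
          simp only [hWs0, mul_zero, zero_mul, zero_add]
          refine Finset.sum_congr rfl fun b' _ => ?_
          rw [Fin.sum_univ_succ]
          simp only [hWs0, hWss, zero_mul, zero_add]
          rfl
        rw [hml, hW'diag l']
        have hcast : (((m+1 : ℕ)) : ℝ) = (m:ℝ)+1 := by push_cast; ring
        have htrM' : Matrix.trace M' = Matrix.trace M - Matrix.trace M / ((m:ℝ)+1) := by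
          have h1 : Matrix.trace N = N 0 0 + Matrix.trace M' := by
            simp only [Matrix.trace, Matrix.diag]
            rw [Fin.sum_univ_succ]
            rfl
          rw [hV00, hcast, htrN] at h1
          linarith
        rw [htrM', hcast]
        have hmne : (m : ℝ) ≠ 0 := Nat.cast_ne_zero.mpr (by omega)
        have hm1ne : ((m : ℝ) + 1) ≠ 0 := by positivity
        push_cast
        field_simp
        ring

lemma trace_quad_diag {p k : ℕ} (C : Matrix (Fin k) (Fin p) ℝ) (w : Fin p → ℝ) :
    Matrix.trace (C * Matrix.diagonal w * Cᵀ) = ∑ j, (∑ i, (C i j)^2) * w j := by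
  simp only [Matrix.trace, Matrix.diag, Matrix.mul_apply, Matrix.transpose_apply,
    Matrix.diagonal_apply, mul_ite, mul_zero, Finset.sum_ite_eq', Finset.mem_univ, if_true]
  rw [Finset.sum_comm]
  refine Finset.sum_congr rfl fun j _ => ?_
  rw [Finset.sum_mul]
  refine Finset.sum_congr rfl fun i _ => ?_
  ring

lemma trace_inv_mono {p k : ℕ} (M : Matrix (Fin p) (Fin p) ℝ) (hM : M.PosSemidef)
    (B : Matrix (Fin k) (Fin p) ℝ) {a b : ℝ} (ha : 0 < a) (hab : a ≤ b) :
    Matrix.trace (B * (M + b • (1 : Matrix (Fin p) (Fin p) ℝ))⁻¹ * Bᵀ)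
      ≤ Matrix.trace (B * (M + a • (1 : Matrix (Fin p) (Fin p) ℝ))⁻¹ * Bᵀ) := by
  classical
  have hH := hM.1
  set Q : Matrix (Fin p) (Fin p) ℝ := (hH.eigenvectorUnitary : Matrix (Fin p) (Fin p) ℝ) with hQ
  set d := hH.eigenvalues with hd
  have hQ1 : star Q * Q = 1 := ((Unitary.mem_iff).mp (hH.eigenvectorUnitary).2).1
  have hQ2 : Q * star Q = 1 := ((Unitary.mem_iff).mp (hH.eigenvectorUnitary).2).2
  have hspec : M = Q * Matrix.diagonal d * star Q := by
    have := hH.spectral_theorem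
    rwa [RCLike.ofReal_real_eq_id, Function.id_comp] at this
  have hdnn : ∀ j, 0 ≤ d j := fun j => hM.eigenvalues_nonneg j
  -- decomposition of shifted matrix and its inverse
  have key : ∀ x : ℝ, 0 < x →
      (M + x • (1 : Matrix (Fin p) (Fin p) ℝ))⁻¹
        = Q * Matrix.diagonal (fun j => (d j + x)⁻¹) * star Q := by
    intro x hx
    have hshift : M + x • (1 : Matrix (Fin p) (Fin p) ℝ)
        = Q * Matrix.diagonal (fun j => d j + x) * star Q := by
      have h1 : Matrix.diagonal (fun j => d j + x)
          = Matrix.diagonal d + x • (1 : Matrix (Fin p) (Fin p) ℝ) := by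
        ext i j'
        by_cases h : i = j' <;>
          simp [Matrix.diagonal_apply, Matrix.one_apply, h]
      rw [h1, Matrix.mul_add, Matrix.add_mul, ← hspec]
      congr 1
      rw [Matrix.mul_smul, Matrix.smul_mul, Matrix.mul_one, hQ2]
    apply Matrix.inv_eq_right_inv
    rw [hshift]
    simp only [Matrix.mul_assoc]
    rw [← Matrix.mul_assoc (star Q) Q, hQ1, Matrix.one_mul,
      ← Matrix.mul_assoc (Matrix.diagonal _) (Matrix.diagonal _),
      Matrix.diagonal_mul_diagonal]
    have : (fun j => (d j + x) * (d j + x)⁻¹) = fun _ => (1:ℝ) := by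
      funext j
      exact mul_inv_cancel₀ (ne_of_gt (by have := hdnn j; linarith) : (d j + x) ≠ 0)
    rw [this, Matrix.diagonal_one, Matrix.one_mul, hQ2]
  have hb : 0 < b := lt_of_lt_of_le ha hab
  have hstarQ : star Q = Qᵀ := Matrix.conjTranspose_eq_transpose_of_trivial Q
  have htr : ∀ x : ℝ, 0 < x →
      Matrix.trace (B * (M + x • (1 : Matrix (Fin p) (Fin p) ℝ))⁻¹ * Bᵀ)
        = ∑ j, (∑ i, ((B * Q) i j)^2) * (d j + x)⁻¹ := by
    intro x hx
    rw [key x hx, hstarQ, ← trace_quad_diag (B * Q) (fun j => (d j + x)⁻¹)]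
    rw [Matrix.transpose_mul]
    simp only [Matrix.mul_assoc]
  rw [htr a ha, htr b hb]
  apply Finset.sum_le_sum
  intro j _
  have h1 : 0 < d j + a := by have := hdnn j; linarith
  have h2 : d j + a ≤ d j + b := by linarith
  have : (d j + b)⁻¹ ≤ (d j + a)⁻¹ := by
    apply inv_anti₀ h1 h2
  apply mul_le_mul_of_nonneg_left this
  positivity

lemma posSemidef_diag_nonneg {p : ℕ} {M : Matrix (Fin p) (Fin p) ℝ}
    (hM : M.PosSemidef) (l : Fin p) : 0 ≤ M l l := by
  have := hM.dotProduct_mulVec_nonneg (Pi.single l 1)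
  simpa [dotProduct, Matrix.mulVec, Pi.single_apply] using this


/-- Minimal (over digital matrices) MSE of the hardware-limited task-based quantizer with
analog combining matrix `A`: the per-quantizer noise level is `c` times the largest diagonal
entry of `A S Aᵀ` (largest input variance). -/
noncomputable def hlMSE {k n p : ℕ} (S : Matrix (Fin n) (Fin n) ℝ)
    (Γ : Matrix (Fin k) (Fin n) ℝ) (c : ℝ) (A : Matrix (Fin p) (Fin n) ℝ) : ℝ :=
  Matrix.trace (Γ * S * Γᵀ)
    - Matrix.trace (Γ * S * Aᵀ *
        (A * S * Aᵀ
          + (c * (⨆ l : Fin p, (A * S * Aᵀ) l l)) • (1 : Matrix (Fin p) (Fin p) ℝ))⁻¹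
        * A * S * Γᵀ)

/-- **paper's Lemma A.3.** For every nonzero analog combining matrix `A`
there is an orthogonal rotation `U` such that `MSE(UA)` equals the expression with the
average `(c/p)Tr(AΣAᵀ)` in place of the maximal diagonal entry, and `MSE(UA) ≤ MSE(A)`. -/
theorem optimal_rotation
    {k n p : ℕ} (hp : 0 < p)
    (S : Matrix (Fin n) (Fin n) ℝ) (hS : S.PosDef)
    (Γ : Matrix (Fin k) (Fin n) ℝ) (c : ℝ) (hc : 0 < c) :
    ∀ A : Matrix (Fin p) (Fin n) ℝ, A ≠ 0 →
      ∃ U : Matrix (Fin p) (Fin p) ℝ, Uᵀ * U = 1 ∧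
        hlMSE S Γ c (U * A)
          = Matrix.trace (Γ * S * Γᵀ)
            - Matrix.trace (Γ * S * Aᵀ *
                (A * S * Aᵀ
                  + ((c / p) * Matrix.trace (A * S * Aᵀ)) • (1 : Matrix (Fin p) (Fin p) ℝ))⁻¹
                * A * S * Γᵀ) ∧
        hlMSE S Γ c (U * A) ≤ hlMSE S Γ c A := by
  intro A hA
  haveI : Nonempty (Fin p) := Fin.pos_iff_nonempty.mp hp
  have hSsymm : Sᵀ = S := by
    rw [← Matrix.conjTranspose_eq_transpose_of_trivial]
    exact hS.1
  set M : Matrix (Fin p) (Fin p) ℝ := A * S * Aᵀ with hMdef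
  have hMsymm : Mᵀ = M := by
    rw [hMdef, Matrix.transpose_mul, Matrix.transpose_mul, Matrix.transpose_transpose,
      hSsymm, Matrix.mul_assoc]
  have hMpsd : M.PosSemidef := by
    have := hS.posSemidef.mul_mul_conjTranspose_same A
    rwa [Matrix.conjTranspose_eq_transpose_of_trivial] at this
  -- diagonal entries nonneg; one positive
  have hdiag0 : ∀ l, 0 ≤ M l l := posSemidef_diag_nonneg hMpsd
  have htrpos : 0 < Matrix.trace M := by
    obtain ⟨i, j, hij⟩ : ∃ i j, A i j ≠ 0 := by
      by_contra h
      push_neg at h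
      exact hA (by ext i j; simpa using h i j)
    have hrow : (fun j => A i j) ≠ 0 := by
      intro h
      exact hij (congrFun h j)
    have hpos : 0 < M i i := by
      have h2 := hS.dotProduct_mulVec_pos (x := fun j => A i j) hrow
      simp only [star_trivial] at h2
      have : M i i = dotProduct (fun j => A i j) (S *ᵥ (fun j => A i j)) := by
        simp only [hMdef, Matrix.mul_apply, Matrix.transpose_apply, dotProduct, Matrix.mulVec]
        simp_rw [Finset.sum_mul, Finset.mul_sum]
        rw [Finset.sum_comm]
        exact Finset.sum_congr rfl fun x _ => Finset.sum_congr rfl fun y _ => by ring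
      rw [this]
      exact h2
    have : Matrix.trace M = ∑ l, M l l := rfl
    rw [this]
    have : M i i ≤ ∑ l, M l l :=
      Finset.single_le_sum (fun l _ => hdiag0 l) (Finset.mem_univ i)
    linarith
  set t : ℝ := Matrix.trace M / p with ht
  have hpne : (0:ℝ) < p := by exact_mod_cast hp
  have htpos : 0 < t := div_pos htrpos hpne
  set msup : ℝ := ⨆ l, M l l with hmsup
  have hbdd : BddAbove (Set.range fun l => M l l) := (Set.finite_range _).bddAbove
  have hsupge : t ≤ msup := by
    have hsum : Matrix.trace M ≤ p * msup := by
      have := Finset.sum_le_card_nsmul Finset.univ (fun l => M l l) msup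
        (fun l _ => le_ciSup hbdd l)
      simpa [Matrix.trace, Matrix.diag, nsmul_eq_mul] using this
    rw [ht, div_le_iff₀ hpne]
    linarith [hsum]
  obtain ⟨U, hUo, hUdiag⟩ := exists_const_diag p M hMsymm
  have hUUt : U * Uᵀ = 1 := mul_eq_one_comm.mp hUo
  have hUAS : (U * A) * S * (U * A)ᵀ = U * M * Uᵀ := by
    rw [Matrix.transpose_mul, hMdef]
    simp only [Matrix.mul_assoc]
  have hsup' : (⨆ l, ((U * A) * S * (U * A)ᵀ) l l) = t := by
    simp only [hUAS, hUdiag]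
    exact ciSup_const
  have hcollapse : ∀ (q : ℕ) (Y : Matrix (Fin p) (Fin q) ℝ), Uᵀ * (U * Y) = Y := fun q Y => by
    rw [← Matrix.mul_assoc, hUo, Matrix.one_mul]
  have hXinv : ((U * A) * S * (U * A)ᵀ
      + (c * (⨆ l, ((U * A) * S * (U * A)ᵀ) l l)) • (1 : Matrix (Fin p) (Fin p) ℝ))⁻¹
      = U * (M + (c * t) • (1 : Matrix (Fin p) (Fin p) ℝ))⁻¹ * Uᵀ := by
    rw [hsup', hUAS]
    have hblk : U * M * Uᵀ + (c * t) • (1 : Matrix (Fin p) (Fin p) ℝ)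
        = U * (M + (c * t) • (1 : Matrix (Fin p) (Fin p) ℝ)) * Uᵀ := by
      rw [Matrix.mul_add, Matrix.add_mul]
      congr 1
      rw [Matrix.mul_smul, Matrix.smul_mul, Matrix.mul_one, hUUt]
    rw [hblk, Matrix.mul_inv_rev, Matrix.mul_inv_rev]
    rw [Matrix.inv_eq_left_inv hUo, Matrix.inv_eq_left_inv hUUt]
    simp only [Matrix.mul_assoc]
  -- the trace term for U*A equals that with (c*t)
  have hterm : Γ * S * (U * A)ᵀ
        * ((U * A) * S * (U * A)ᵀ
          + (c * (⨆ l, ((U * A) * S * (U * A)ᵀ) l l)) • (1 : Matrix (Fin p) (Fin p) ℝ))⁻¹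
        * (U * A) * S * Γᵀ
      = Γ * S * Aᵀ * (M + (c * t) • (1 : Matrix (Fin p) (Fin p) ℝ))⁻¹ * A * S * Γᵀ := by
    rw [hXinv, Matrix.transpose_mul]
    simp only [Matrix.mul_assoc]
    simp only [hcollapse]
  have hct : c * t = (c / p) * Matrix.trace M := by
    rw [ht]; ring
  refine ⟨U, hUo, ?_, ?_⟩
  · rw [hlMSE]
    rw [hterm, hct]
  · rw [hlMSE, hlMSE, hterm, ← hMdef]
    rw [hmsup] at hsupge
    have hBt : (Γ * S * Aᵀ)ᵀ = A * S * Γᵀ := by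
      rw [Matrix.transpose_mul, Matrix.transpose_mul, Matrix.transpose_transpose, hSsymm,
        Matrix.mul_assoc]
    have hmono := trace_inv_mono M hMpsd (Γ * S * Aᵀ)
      (mul_pos hc htpos) (mul_le_mul_of_nonneg_left hsupge (le_of_lt hc))
    rw [hBt] at hmono
    simp only [Matrix.mul_assoc] at hmono ⊢
    linarith [hmono]
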